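/- Let G be a proper subdomain of ℝⁿ. Then for all x, y ∈ G, p_G(x,y) ≤ (1/√2) · j_G(x,y). -/

import Mathlib

open Metric Set

/-- The triangular ratio metric `s_G(x,y) = sup_{z ∈ ∂G} |x-y|/(|x-z|+|z-y|)`. -/
noncomputable def triangularRatio {n : ℕ} (G : Set (EuclideanSpace ℝ (Fin n)))
    (x y : EuclideanSpace ℝ (Fin n)) : ℝ :=
  ⨆ z : frontier G, dist x y / (dist x z.1 + dist z.1 y)

/-- Distance to the boundary `d_G(x) = dist(x, ∂G)`. -/
noncomputable def distBd {n : ℕ} (G : Set (EuclideanSpace ℝ (Fin n)))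
    (x : EuclideanSpace ℝ (Fin n)) : ℝ :=
  Metric.infDist x (frontier G)

/-- The distance ratio metric `j_G(x,y) = log(1 + |x-y|/min{d_G(x), d_G(y)})`. -/
noncomputable def distRatio {n : ℕ} (G : Set (EuclideanSpace ℝ (Fin n)))
    (x y : EuclideanSpace ℝ (Fin n)) : ℝ :=
  Real.log (1 + dist x y / min (distBd G x) (distBd G y))

/-- The quantity `p_G(x,y) = |x-y| / √(|x-y|² + 4 d_G(x) d_G(y))`. -/
noncomputable def pMetric {n : ℕ} (G : Set (EuclideanSpace ℝ (Fin n)))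
    (x y : EuclideanSpace ℝ (Fin n)) : ℝ :=
  dist x y / Real.sqrt (dist x y ^ 2 + 4 * distBd G x * distBd G y)

/-- Padé-type lower bound for the logarithm: `2u/(2+u) ≤ log(1+u)` for `u ≥ 0`. -/
lemma two_mul_div_le_log_one_add {u : ℝ} (hu : 0 ≤ u) :
    2 * u / (2 + u) ≤ Real.log (1 + u) := by
  set f : ℝ → ℝ := fun w => Real.log (1 + w) - 2 * w / (2 + w) with hf
  have hderiv : ∀ v : ℝ, 0 ≤ v → HasDerivAt f (1 / (1 + v) - 4 / (2 + v) ^ 2) v := by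
    intro v hv
    have h1 : (1 : ℝ) + v ≠ 0 := by linarith
    have h2 : (2 : ℝ) + v ≠ 0 := by linarith
    have hlog : HasDerivAt (fun w : ℝ => Real.log (1 + w)) (1 / (1 + v)) v := by
      have := (Real.hasDerivAt_log h1).comp v ((hasDerivAt_id v).const_add 1)
      simpa [one_div, Function.comp_def] using this
    have hq : HasDerivAt (fun w : ℝ => 2 * w / (2 + w)) (4 / (2 + v) ^ 2) v := by
      have hnum : HasDerivAt (fun w : ℝ => 2 * w) 2 v := by
        simpa using (hasDerivAt_id v).const_mul 2
      have hden : HasDerivAt (fun w : ℝ => 2 + w) 1 v := (hasDerivAt_id v).const_add 2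
      have : HasDerivAt (fun w : ℝ => 2 * w / (2 + w)) ((2 * (2 + v) - 2 * v * 1) / (2 + v) ^ 2) v :=
        hnum.div hden h2
      convert this using 1
      ring
    exact hlog.sub hq
  have hmono : MonotoneOn f (Set.Ici 0) := by
    apply monotoneOn_of_deriv_nonneg (convex_Ici 0)
    · intro v hv
      exact ((hderiv v hv).continuousAt).continuousWithinAt
    · intro v hv
      rw [interior_Ici] at hv
      have hv' : 0 < v := mem_Ioi.mp hv
      exact (hderiv v hv'.le).differentiableAt.differentiableWithinAt
    · intro v hv
      rw [interior_Ici] at hv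
      have hv' : 0 < v := mem_Ioi.mp hv
      rw [(hderiv v hv'.le).deriv]
      have h1 : (0 : ℝ) < 1 + v := by linarith
      have h2 : (0 : ℝ) < 2 + v := by linarith
      rw [sub_nonneg, div_le_div_iff₀ (by positivity) h1]
      nlinarith [sq_nonneg v]
  have h0 : f 0 = 0 := by simp [hf]
  have := hmono (Set.mem_Ici.mpr le_rfl) (Set.mem_Ici.mpr hu) hu
  rw [h0] at this
  have : 0 ≤ Real.log (1 + u) - 2 * u / (2 + u) := this
  linarith

/-- For a proper subdomain `G ⊊ ℝⁿ` and all `x, y ∈ G`,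
`p_G(x,y) ≤ (1/√2) · j_G(x,y)`. -/
theorem pG_le_inv_sqrt_two_mul_jG {n : ℕ}
    (G : Set (EuclideanSpace ℝ (Fin n)))
    (hGopen : IsOpen G) (hGconn : IsConnected G) (hGproper : G ≠ univ)
    (x y : EuclideanSpace ℝ (Fin n)) (hx : x ∈ G) (hy : y ∈ G) :
    pMetric G x y ≤ (1 / Real.sqrt 2) * distRatio G x y := by
  -- the frontier is nonempty
  have hne : (frontier G).Nonempty := by
    rw [nonempty_iff_ne_empty]
    intro h
    have hclopen : IsClopen G := isClopen_iff_frontier_eq_empty.mpr h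
    rcases isClopen_iff.mp hclopen with h' | h'
    · exact absurd (h' ▸ hx) (notMem_empty x)
    · exact hGproper h'
  have hfr : ∀ z ∈ G, 0 < distBd G z := by
    intro z hz
    have hzf : z ∉ frontier G := by
      rw [hGopen.frontier_eq]
      exact fun h => h.2 hz
    exact (isClosed_frontier.notMem_iff_infDist_pos hne).mp hzf
  have hdx : 0 < distBd G x := hfr x hx
  have hdy : 0 < distBd G y := hfr y hy
  set dx := distBd G x
  set dy := distBd G y
  set d : ℝ := min dx dy with hd
  have hdpos : 0 < d := lt_min hdx hdy
  set t : ℝ := dist x y with ht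
  have htn : 0 ≤ t := dist_nonneg
  have hs2 : (0 : ℝ) < Real.sqrt 2 := by positivity
  -- Step 1 : pMetric ≤ t / √(t² + 4 d²)
  have h1 : pMetric G x y ≤ t / Real.sqrt (t ^ 2 + 4 * d ^ 2) := by
    unfold pMetric
    apply div_le_div_of_nonneg_left htn (by positivity)
    apply Real.sqrt_le_sqrt
    have h1 : d ≤ dx := min_le_left _ _
    have h2 : d ≤ dy := min_le_right _ _
    nlinarith [hdpos.le]
  -- Step 2 : t / √(t² + 4 d²) ≤ (1/√2) * (2 t / (2 d + t))
  have hsq : (2 * d + t) / Real.sqrt 2 ≤ Real.sqrt (t ^ 2 + 4 * d ^ 2) := by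
    rw [Real.le_sqrt (by positivity) (by positivity), div_pow, Real.sq_sqrt (by norm_num : (0:ℝ) ≤ 2),
      div_le_iff₀ (by norm_num : (0:ℝ) < 2)]
    nlinarith [sq_nonneg (t - 2 * d)]
  have h2 : t / Real.sqrt (t ^ 2 + 4 * d ^ 2) ≤ (1 / Real.sqrt 2) * (2 * t / (2 * d + t)) := by
    have hden : (0 : ℝ) < (2 * d + t) / Real.sqrt 2 := by positivity
    have := div_le_div_of_nonneg_left htn hden hsq
    calc t / Real.sqrt (t ^ 2 + 4 * d ^ 2) ≤ t / ((2 * d + t) / Real.sqrt 2) := this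
      _ = (1 / Real.sqrt 2) * (2 * t / (2 * d + t)) := by
          rw [div_div_eq_mul_div]
          rw [show (1 / Real.sqrt 2) * (2 * t / (2 * d + t))
              = (2 / Real.sqrt 2) * t / (2 * d + t) by ring]
          rw [Real.div_sqrt]
          ring
  -- Step 3 : 2 t / (2 d + t) ≤ log (1 + t / d)
  have h3 : 2 * t / (2 * d + t) ≤ Real.log (1 + t / d) := by
    have hu : 0 ≤ t / d := by positivity
    have hlog := two_mul_div_le_log_one_add hu
    have hd0 : d ≠ 0 := ne_of_gt hdpos
    have heq : 2 * (t / d) / (2 + t / d) = 2 * t / (2 * d + t) := by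
      have h2d : (2:ℝ) * d + t ≠ 0 := by positivity
      have h2u : (2:ℝ) + t / d ≠ 0 := by positivity
      field_simp
    rwa [heq] at hlog
  -- assemble
  have hfinal : (1 / Real.sqrt 2) * (2 * t / (2 * d + t)) ≤
      (1 / Real.sqrt 2) * Real.log (1 + t / d) :=
    mul_le_mul_of_nonneg_left h3 (by positivity)
  have hrw : distRatio G x y = Real.log (1 + t / d) := rfl
  rw [hrw]
  exact le_trans h1 (le_trans h2 hfinal)
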